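/- Let m be a positive integer and let n, ν be integers with 0 ≤ n < 2m and 0 ≤ ν ≤ 2m. Let τ lie in the upper half-plane and z ∈ ℂ with m·z ∉ ℤ + ℤτ. Then G^{[m]}_{n,ν}(τ + 1, z) = e^{πi(ν+1/2)²/(2m+1)} G^{[m]}_{n,ν}(τ, z). -/

import Mathlib

noncomputable section

open Complex

/-- `e2 w = exp (2 π i w)`; with `q = e^{2πiτ}`, the power `q^x` corresponds to `e2 (x * τ)`. -/
def e2 (w : ℂ) : ℂ := Complex.exp (2 * (Real.pi : ℂ) * Complex.I * w)

/-- Jacobi-type theta function `θ^{(ε)}_{n,m}(τ, z) = ∑_{j∈ℤ} ε^j q^{m(j+n/(2m))²} e^{2πim(j+n/(2m))z}`. -/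
def jtheta (ε n m τ z : ℂ) : ℂ :=
  ∑' j : ℤ, ε ^ j *
    e2 (m * ((j : ℂ) + n / (2 * m)) ^ 2 * τ + m * ((j : ℂ) + n / (2 * m)) * z)

/-- Mock theta function `Φ₁^{(ε)[m,s]}(τ, z₁, z₂)`. -/
def Phi1 (ε m s τ z₁ z₂ : ℂ) : ℂ :=
  ∑' j : ℤ, ε ^ j *
    e2 (m * (j : ℂ) * (z₁ + z₂) + s * z₁ + (m * (j : ℂ) ^ 2 + s * (j : ℂ)) * τ) /
      (1 - e2 (z₁ + (j : ℂ) * τ))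

/-- Dedekind eta function `η(τ) = q^{1/24} ∏_{k≥1} (1 - q^k)`. -/
def dedekindEta (τ : ℂ) : ℂ := e2 (τ / 24) * ∏' k : ℕ, (1 - e2 (((k : ℂ) + 1) * τ))

/-- Jacobi theta `ϑ₁₁(τ, z) = i ∑_{j∈ℤ} (−1)^j q^{(j+1/2)²/2} e^{2πi(j+1/2)z}`. -/
def theta11 (τ z : ℂ) : ℂ :=
  Complex.I * ∑' j : ℤ, (-1 : ℂ) ^ j *
    e2 (((j : ℂ) + 1 / 2) ^ 2 / 2 * τ + ((j : ℂ) + 1 / 2) * z)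

/-- Indefinite double sum `(∑_{j,p∈ℤ, 0<p≤j} − ∑_{j,p∈ℤ, j<p≤0}) f j p`. -/
def indefSum (f : ℤ → ℤ → ℂ) : ℂ :=
  ∑' jp : ℤ × ℤ,
    ((if 0 < jp.2 ∧ jp.2 ≤ jp.1 then f jp.1 jp.2 else 0) -
      (if jp.1 < jp.2 ∧ jp.2 ≤ 0 then f jp.1 jp.2 else 0))

/-- `g^{[m]}_{n,ν}(τ)`. -/
def gfun (m : ℂ) (n ν : ℤ) (τ : ℂ) : ℂ :=
  indefSum fun j p =>
    (-1 : ℂ) ^ j *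
      e2 (((m + 1 / 2) * ((j : ℂ) + (ν : ℂ) - ((ν : ℂ) + 1 / 2) / (2 * m + 1)) ^ 2 -
        m * ((p : ℂ) + (ν : ℂ) - (n : ℂ) / (2 * m)) ^ 2) * τ)

/-- `h^{[m]}_{n,ν}(τ, z)`. -/
def hfun (m : ℂ) (n ν : ℤ) (τ z : ℂ) : ℂ :=
  ∑' j : ℤ,
    e2 (m * (j : ℂ) * z + (n : ℂ) * z / 2 +
        (m * (j : ℂ) ^ 2 + (n : ℂ) * ((j : ℂ) + (ν : ℂ))) * τ) /
      (1 - e2 (m * z + 2 * m * ((j : ℂ) + (ν : ℂ)) * τ))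

/-- `G^{[m]}_{n,ν}(τ, z)`. -/
def Gfun (m : ℂ) (n ν : ℤ) (τ z : ℂ) : ℂ :=
  gfun m n ν τ * jtheta 1 (n : ℂ) m τ z +
    (-1 : ℂ) ^ ν * e2 (-(m * (ν : ℂ) ^ 2) * τ) *
      jtheta (-1) ((ν : ℂ) + 1 / 2) (m + 1 / 2) τ 0 * hfun m n ν τ z

/-- `F^{[m](a,b)}_{n,ν}(τ, z)`. -/
def Ffun (m : ℂ) (a b n ν : ℤ) (τ z : ℂ) : ℂ :=
  e2 ((a : ℂ) * z / 2 + (a : ℂ) ^ 2 / (4 * m) * τ) *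
    Gfun m n ν τ (z + (a : ℂ) * τ / m + (b : ℂ) / m)

/-- The coefficient `f_{j,k}` of Lemma 3.1:
`f_{j,k} = (−1)^j q^{(m+1/2)(j+s/(2m+1))² − k²/(4m)} e^{−2πijm(z₁−z₂)+πik(z₁−z₂)}`. -/
def fcoef (m s τ z₁ z₂ : ℂ) (j k : ℤ) : ℂ :=
  (-1 : ℂ) ^ j *
    e2 (((m + 1 / 2) * ((j : ℂ) + s / (2 * m + 1)) ^ 2 - (k : ℂ) ^ 2 / (4 * m)) * τ +
      (-((j : ℂ) * m) + (k : ℂ) / 2) * (z₁ - z₂))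

lemma e2_add (a b : ℂ) : e2 (a + b) = e2 a * e2 b := by
  simp [e2, mul_add, Complex.exp_add]

lemma e2_int (k : ℤ) : e2 (k : ℂ) = 1 := by
  have := Complex.exp_int_mul_two_pi_mul_I k
  simpa [e2, mul_comm, mul_assoc, mul_left_comm] using this

lemma e2_int_add (k : ℤ) (a : ℂ) : e2 ((k : ℂ) + a) = e2 a := by
  rw [e2_add, e2_int, one_mul]

lemma jtheta1_shift (n : ℤ) (m : ℕ) (hm : m ≠ 0) (τ z : ℂ) :
    jtheta 1 (n : ℂ) (m : ℂ) (τ + 1) z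
      = e2 ((n : ℂ) ^ 2 / (4 * m)) * jtheta 1 (n : ℂ) (m : ℂ) τ z := by
  have hm' : (m : ℂ) ≠ 0 := Nat.cast_ne_zero.mpr hm
  unfold jtheta
  rw [← tsum_mul_left]
  refine tsum_congr fun j => ?_
  have key : (m : ℂ) * ((j : ℂ) + n / (2 * m)) ^ 2 * (τ + 1)
        + (m : ℂ) * ((j : ℂ) + n / (2 * m)) * z
      = (((m : ℤ) * j ^ 2 + j * n : ℤ) : ℂ)
        + ((n : ℂ) ^ 2 / (4 * m)
          + ((m : ℂ) * ((j : ℂ) + n / (2 * m)) ^ 2 * τ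
            + (m : ℂ) * ((j : ℂ) + n / (2 * m)) * z)) := by
    push_cast
    field_simp
    ring
  rw [key, e2_int_add, e2_add]
  simp [mul_comm, mul_assoc, mul_left_comm]

lemma jtheta_neg_shift (ν : ℤ) (m : ℕ) (hm : m ≠ 0) (τ : ℂ) :
    jtheta (-1) ((ν : ℂ) + 1 / 2) ((m : ℂ) + 1 / 2) (τ + 1) 0
      = e2 (((ν : ℂ) + 1 / 2) ^ 2 / (2 * (2 * (m : ℂ) + 1)))
        * jtheta (-1) ((ν : ℂ) + 1 / 2) ((m : ℂ) + 1 / 2) τ 0 := by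
  have h2m : (2 * (m : ℂ) + 1) ≠ 0 := by
    have : ((2 * m + 1 : ℕ) : ℂ) ≠ 0 := Nat.cast_ne_zero.mpr (by omega)
    push_cast at this
    exact this
  unfold jtheta
  rw [← tsum_mul_left]
  refine tsum_congr fun j => ?_
  obtain ⟨t, ht⟩ := Int.even_mul_succ_self j
  have ht' : (j : ℂ) * ((j : ℂ) + 1) = 2 * (t : ℂ) := by
    have := congrArg (Int.cast : ℤ → ℂ) ht
    push_cast at this
    linear_combination this
  have hX : ((m : ℂ) + 1 / 2) * ((j : ℂ) + ((ν : ℂ) + 1 / 2) / (2 * ((m : ℂ) + 1 / 2))) ^ 2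
      = ((m : ℂ) + 1 / 2) * (j : ℂ) ^ 2 + (j : ℂ) * ((ν : ℂ) + 1 / 2)
        + ((ν : ℂ) + 1 / 2) ^ 2 / (2 * (2 * (m : ℂ) + 1)) := by
    have hd : 2 * ((m : ℂ) + 1 / 2) = 2 * (m : ℂ) + 1 := by ring
    rw [hd]
    generalize hD : 2 * (m : ℂ) + 1 = D at h2m ⊢
    rw [show (m : ℂ) = (D - 1) / 2 by rw [← hD]; ring]
    field_simp
    ring
  have key : ((m : ℂ) + 1 / 2) * ((j : ℂ) + ((ν : ℂ) + 1 / 2) / (2 * ((m : ℂ) + 1 / 2))) ^ 2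
        * (τ + 1)
        + ((m : ℂ) + 1 / 2) * ((j : ℂ) + ((ν : ℂ) + 1 / 2) / (2 * ((m : ℂ) + 1 / 2))) * 0
      = (((m : ℤ) * j ^ 2 + j * ν + t : ℤ) : ℂ)
        + (((ν : ℂ) + 1 / 2) ^ 2 / (2 * (2 * (m : ℂ) + 1))
          + (((m : ℂ) + 1 / 2) * ((j : ℂ) + ((ν : ℂ) + 1 / 2) / (2 * ((m : ℂ) + 1 / 2))) ^ 2 * τ
            + ((m : ℂ) + 1 / 2) * ((j : ℂ) + ((ν : ℂ) + 1 / 2) / (2 * ((m : ℂ) + 1 / 2))) * 0)) := by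
    rw [hX]
    push_cast
    linear_combination (1 + τ - τ) * ht' / 2
  rw [key, e2_int_add, e2_add]
  ring

lemma gfun_shift (n ν : ℤ) (m : ℕ) (hm : m ≠ 0) (τ : ℂ) :
    gfun (m : ℂ) n ν (τ + 1)
      = e2 (((ν : ℂ) + 1 / 2) ^ 2 / (2 * (2 * (m : ℂ) + 1)) - (n : ℂ) ^ 2 / (4 * m))
        * gfun (m : ℂ) n ν τ := by
  have hm' : (m : ℂ) ≠ 0 := Nat.cast_ne_zero.mpr hm
  unfold gfun indefSum
  rw [← tsum_mul_left]
  refine tsum_congr fun jp => ?_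
  beta_reduce
  set j := jp.1 with hj
  set p := jp.2 with hp
  obtain ⟨t, ht⟩ := Int.even_mul_succ_self (j + ν - 1)
  have ht' : ((j : ℂ) + ν - 1) * ((j : ℂ) + ν) = 2 * (t : ℂ) := by
    have := congrArg (Int.cast : ℤ → ℂ) ht
    push_cast at this
    linear_combination this
  have h2m : (2 * (m : ℂ) + 1) ≠ 0 := by
    have h1 : ((2 * m + 1 : ℕ) : ℂ) ≠ 0 := Nat.cast_ne_zero.mpr (by omega)
    push_cast at h1
    exact h1
  have hA : ((m : ℂ) + 1 / 2) * ((j : ℂ) + (ν : ℂ) - ((ν : ℂ) + 1 / 2) / (2 * m + 1)) ^ 2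
      = ((m : ℂ) + 1 / 2) * ((j : ℂ) + (ν : ℂ)) ^ 2
        - ((j : ℂ) + (ν : ℂ)) * ((ν : ℂ) + 1 / 2)
        + ((ν : ℂ) + 1 / 2) ^ 2 / (2 * (2 * (m : ℂ) + 1)) := by
    generalize hD : 2 * (m : ℂ) + 1 = D at h2m ⊢
    rw [show (m : ℂ) = (D - 1) / 2 by rw [← hD]; ring]
    field_simp
    ring
  have hB : (m : ℂ) * ((p : ℂ) + (ν : ℂ) - (n : ℂ) / (2 * m)) ^ 2
      = (m : ℂ) * ((p : ℂ) + (ν : ℂ)) ^ 2 - ((p : ℂ) + (ν : ℂ)) * (n : ℂ)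
        + (n : ℂ) ^ 2 / (4 * m) := by
    field_simp
    ring
  have key : (((m : ℂ) + 1 / 2) * ((j : ℂ) + (ν : ℂ) - ((ν : ℂ) + 1 / 2) / (2 * m + 1)) ^ 2
        - (m : ℂ) * ((p : ℂ) + (ν : ℂ) - (n : ℂ) / (2 * m)) ^ 2) * (τ + 1)
      = (((m : ℤ) * (j + ν) ^ 2 + t - (j + ν) * ν - (m : ℤ) * (p + ν) ^ 2 + (p + ν) * n : ℤ) : ℂ)
        + ((((ν : ℂ) + 1 / 2) ^ 2 / (2 * (2 * (m : ℂ) + 1)) - (n : ℂ) ^ 2 / (4 * m))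
          + (((m : ℂ) + 1 / 2) * ((j : ℂ) + (ν : ℂ) - ((ν : ℂ) + 1 / 2) / (2 * m + 1)) ^ 2
            - (m : ℂ) * ((p : ℂ) + (ν : ℂ) - (n : ℂ) / (2 * m)) ^ 2) * τ) := by
    rw [hA, hB]
    push_cast
    linear_combination (1 + τ - τ) * ht' / 2
  rw [key, e2_int_add, e2_add]
  set c := e2 (((ν : ℂ) + 1 / 2) ^ 2 / (2 * (2 * (m : ℂ) + 1)) - (n : ℂ) ^ 2 / (4 * m))
  split_ifs <;> ring

lemma hfun_shift (n ν : ℤ) (m : ℕ) (τ z : ℂ) :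
    hfun (m : ℂ) n ν (τ + 1) z = hfun (m : ℂ) n ν τ z := by
  unfold hfun
  refine tsum_congr fun j => ?_
  have key1 : (m : ℂ) * (j : ℂ) * z + (n : ℂ) * z / 2
        + ((m : ℂ) * (j : ℂ) ^ 2 + (n : ℂ) * ((j : ℂ) + (ν : ℂ))) * (τ + 1)
      = (((m : ℤ) * j ^ 2 + n * (j + ν) : ℤ) : ℂ)
        + ((m : ℂ) * (j : ℂ) * z + (n : ℂ) * z / 2
          + ((m : ℂ) * (j : ℂ) ^ 2 + (n : ℂ) * ((j : ℂ) + (ν : ℂ))) * τ) := by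
    push_cast; ring
  have key2 : (m : ℂ) * z + 2 * (m : ℂ) * ((j : ℂ) + (ν : ℂ)) * (τ + 1)
      = ((2 * (m : ℤ) * (j + ν) : ℤ) : ℂ)
        + ((m : ℂ) * z + 2 * (m : ℂ) * ((j : ℂ) + (ν : ℂ)) * τ) := by
    push_cast; ring
  rw [key1, key2, e2_int_add, e2_int_add]

theorem stmt_12 (m : ℕ) (hm : 0 < m)
    (n ν : ℤ) (hn : 0 ≤ n ∧ n < 2 * (m : ℤ)) (hν : 0 ≤ ν ∧ ν ≤ 2 * (m : ℤ))
    (τ : ℂ) (hτ : 0 < τ.im) (z : ℂ)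
    (hz : ∀ a b : ℤ, (m : ℂ) * z ≠ (a : ℂ) + (b : ℂ) * τ) :
    Gfun (m : ℂ) n ν (τ + 1) z =
      e2 (((ν : ℂ) + 1 / 2) ^ 2 / (2 * (2 * (m : ℂ) + 1))) * Gfun (m : ℂ) n ν τ z := by
  have hm0 : m ≠ 0 := hm.ne'
  have key0 : -((m : ℂ) * (ν : ℂ) ^ 2) * (τ + 1)
      = ((-((m : ℤ) * ν ^ 2) : ℤ) : ℂ) + -((m : ℂ) * (ν : ℂ) ^ 2) * τ := by
    push_cast; ring
  unfold Gfun
  rw [jtheta1_shift n m hm0, jtheta_neg_shift ν m hm0, gfun_shift n ν m hm0,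
    hfun_shift n ν m, key0, e2_int_add]
  have : e2 (((ν : ℂ) + 1 / 2) ^ 2 / (2 * (2 * (m : ℂ) + 1)) - (n : ℂ) ^ 2 / (4 * m))
      * e2 ((n : ℂ) ^ 2 / (4 * m)) = e2 (((ν : ℂ) + 1 / 2) ^ 2 / (2 * (2 * (m : ℂ) + 1))) := by
    rw [← e2_add]; ring_nf
  linear_combination (gfun (m : ℂ) n ν τ * jtheta 1 (n : ℂ) (m : ℂ) τ z) * this
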